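/- Let (N_1,…,N_r) be a lattice path presentation with incidence function n, let C = {c_0 < c_1 < ⋯ < c_k} ⊆ {1,…,m+r}, and let n(C) = {i_1 < i_2 < ⋯ < i_s}. Then C is a circuit of the lattice path matroid M[N] if and only if (1) s = k, (2) c_0 ∈ N_{i_1}, (3) c_k ∈ N_{i_k}, and (4) c_j ∈ N_{i_j} ∩ N_{i_{j+1}} for every j with 0 < j < k. Furthermore, if C is a circuit, then i_{h+1} = i_h + 1 for all 1 ≤ h < k. -/

import Mathlib

open Set
open scoped Matroid

namespace LPM

variable {α β : Type*}

/-- `I` is a partial transversal of the set family `N`: there is an injection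
matching each element of `I` to an index of a member of the family containing it. -/
def IsPT {ι : Type*} (N : ι → Set α) (I : Set α) : Prop :=
  ∃ f : I → ι, Function.Injective f ∧ ∀ x : I, (x : α) ∈ N (f x)

/-- `I` is a (full) transversal of the set family `N`: there is a bijection
matching each element of `I` to an index of a member of the family containing it. -/
def IsT {ι : Type*} (N : ι → Set α) (I : Set α) : Prop :=
  ∃ f : I → ι, Function.Bijective f ∧ ∀ x : I, (x : α) ∈ N (f x)

/-- A lattice path presentation with nullity `m` and rank `r`: a sequence of
intervals `[l i, g i] ⊆ {1, …, m + r}` whose left endpoints strictly increase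
and whose right endpoints strictly increase. -/
structure LPP (m r : ℕ) where
  l : Fin r → ℕ
  g : Fin r → ℕ
  l_strictMono : StrictMono l
  g_strictMono : StrictMono g
  one_le_l : ∀ i, 1 ≤ l i
  l_le_g : ∀ i, l i ≤ g i
  g_le : ∀ i, g i ≤ m + r

/-- The intervals of a lattice path presentation. -/
def LPP.N {m r : ℕ} (P : LPP m r) (i : Fin r) : Set ℕ := Set.Icc (P.l i) (P.g i)

/-- `M` is the lattice path matroid `M[N]` of the presentation `P`: the ground set
is `{1, …, m + r}` and the independent sets are exactly the partial transversals
of the intervals of `P`. -/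
def IsLPMOf {m r : ℕ} (P : LPP m r) (M : Matroid ℕ) : Prop :=
  M.E = Set.Icc 1 (m + r) ∧
    ∀ I : Set ℕ, M.Indep I ↔ I ⊆ Set.Icc 1 (m + r) ∧ IsPT P.N I

/-- `M` is isomorphic to `M'`: there is a bijection between the ground sets
carrying independent sets to independent sets in both directions. -/
def IsoTo (M : Matroid α) (M' : Matroid β) : Prop :=
  ∃ f : α → β, Set.BijOn f M.E M'.E ∧ ∀ I ⊆ M.E, (M.Indep I ↔ M'.Indep (f '' I))

/-- A lattice path matroid: a matroid isomorphic to `M[N]` for some lattice path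
presentation (presentations with `r = 0` give the rank-zero matroids). -/
def IsLPMatroid (M : Matroid α) : Prop :=
  ∃ (m r : ℕ) (P : LPP m r) (M₀ : Matroid ℕ), IsLPMOf P M₀ ∧ IsoTo M M₀

/-- A circuit of a matroid: a minimal dependent subset of the ground set. -/
def Circuit (M : Matroid α) (C : Set α) : Prop :=
  C ⊆ M.E ∧ ¬ M.Indep C ∧ ∀ D : Set α, D ⊂ C → M.Indep D

/-- A matroid is connected if every two distinct elements of the ground set lie
in a common circuit. -/
def Connected (M : Matroid α) : Prop :=
  ∀ x ∈ M.E, ∀ y ∈ M.E, x ≠ y → ∃ C, Circuit M C ∧ x ∈ C ∧ y ∈ C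

/-- The rank of a set in a matroid: the supremum of the cardinalities of its
independent subsets. -/
noncomputable def rk (M : Matroid α) (X : Set α) : ℕ :=
  sSup {n | ∃ I, I ⊆ X ∧ M.Indep I ∧ I.ncard = n}

/-- A nontrivial connected flat: a flat that is dependent and whose restriction
is a connected matroid. -/
def NTConnFlat (M : Matroid α) (X : Set α) : Prop :=
  M.IsFlat X ∧ ¬ M.Indep X ∧ Connected (M ↾ X)

/-- Deletion of a set from a matroid. -/
def delete (M : Matroid α) (D : Set α) : Matroid α := M ↾ (M.E \ D)

/-- Contraction of a set in a matroid, defined via duality. -/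
def contract (M : Matroid α) (C : Set α) : Matroid α := (delete M✶ C)✶

/-- `Minor M' M` means that `M'` is obtained from `M` by a sequence of deletions
and contractions. -/
inductive Minor : Matroid α → Matroid α → Prop
  | refl (M : Matroid α) : Minor M M
  | del {M' M : Matroid α} (D : Set α) (h : Minor M' M) : Minor (delete M' D) M
  | con {M' M : Matroid α} (C : Set α) (h : Minor M' M) : Minor (contract M' C) M

end LPM


namespace LPMAux
open LPM

lemma isPT_subset {ιT : Type*} {N : ιT → Set ℕ} {I J : Set ℕ} (h : IsPT N I) (hJ : J ⊆ I) :
    IsPT N J := by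
  obtain ⟨f, hinj, hmem⟩ := h
  refine ⟨fun x => f ⟨x, hJ x.2⟩, fun a b hab => ?_, fun x => hmem _⟩
  have h2 := hinj hab
  rw [Subtype.mk_eq_mk] at h2
  exact Subtype.ext h2

lemma isPT_range_iff {t : ℕ} {ιT : Type*} (N : ιT → Set ℕ) (e : Fin t → ℕ)
    (he : Function.Injective e) :
    IsPT N (Set.range e) ↔ ∃ φ : Fin t → ιT, Function.Injective φ ∧ ∀ p, e p ∈ N (φ p) := by
  constructor
  · rintro ⟨f, hinj, hmem⟩
    refine ⟨fun p => f ⟨e p, ⟨p, rfl⟩⟩, fun a b hab => ?_, fun p => hmem _⟩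
    exact he (congrArg Subtype.val (hinj hab))
  · rintro ⟨φ, hinj, hmem⟩
    have hE : ∀ x : Set.range e, ∃ p, e p = (x : ℕ) := fun x => x.2
    choose pre hpre using hE
    refine ⟨fun x => φ (pre x), fun a b hab => ?_, fun x => ?_⟩
    · have h1 : pre a = pre b := hinj hab
      have : (a : ℕ) = (b : ℕ) := by rw [← hpre a, ← hpre b, h1]
      exact Subtype.ext this
    · have := hmem (pre x)
      rwa [hpre x] at this

lemma strictMono_fin_id {k : ℕ} (f : Fin k → Fin k) (h : StrictMono f) : ∀ p, f p = p := by
  have hsurj : Function.Surjective f := Finite.surjective_of_injective h.injective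
  have hr : Set.range f = Set.range (id : Fin k → Fin k) := by
    rw [Set.range_id, Set.range_eq_univ]; exact hsurj
  have := (h.range_inj strictMono_id).1 hr
  intro p; rw [this]; rfl

lemma strictMono_fin_val {k s : ℕ} (hsk : s = k) (ρ : Fin k → Fin s) (h : StrictMono ρ) :
    ∀ q, (ρ q : ℕ) = (q : ℕ) := by
  subst hsk
  intro q
  rw [strictMono_fin_id ρ h q]

lemma sort {m r t : ℕ} (P : LPP m r) (e : Fin t → ℕ) (he : Monotone e)
    (φ : Fin t → Fin r) (hφ : Function.Injective φ) (h : ∀ p, e p ∈ P.N (φ p)) :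
    ∃ ψ : Fin t → Fin r, StrictMono ψ ∧ (∀ p, e p ∈ P.N (ψ p)) ∧
      ∀ p, ψ p ∈ Set.range φ := by
  classical
  set S : Finset (Fin r) := Finset.image φ Finset.univ with hS
  have hcard : S.card = t := by
    rw [hS, Finset.card_image_of_injective _ hφ, Finset.card_univ, Fintype.card_fin]
  set iso := S.orderIsoOfFin hcard with hiso
  set ψ : Fin t → Fin r := fun p => (iso p : Fin r) with hψ
  have hψmono : StrictMono ψ := fun a b hab => by
    exact Subtype.coe_lt_coe.2 (iso.strictMono hab)
  have hφS : ∀ q, φ q ∈ S := fun q => by simp [hS]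
  set σ : Fin t → Fin t := fun q => iso.symm ⟨φ q, hφS q⟩ with hσ
  have hψσ : ∀ q, ψ (σ q) = φ q := fun q => by
    simp [hψ, hσ, OrderIso.apply_symm_apply]
  have hσinj : Function.Injective σ := by
    intro a b hab
    have : (⟨φ a, hφS a⟩ : {x // x ∈ S}) = ⟨φ b, hφS b⟩ := iso.symm.injective hab
    exact hφ (congrArg Subtype.val this)
  refine ⟨ψ, hψmono, fun p => ?_, fun p => ?_⟩
  swap
  · show (iso p : Fin r) ∈ Set.range φ
    have hmem2 : (iso p : Fin r) ∈ Finset.image φ Finset.univ := (iso p).2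
    obtain ⟨y, _, hy⟩ := Finset.mem_image.1 hmem2
    exact ⟨y, hy⟩
  have claim1 : ∃ q, q ≤ p ∧ p ≤ σ q := by
    by_contra hcon
    push_neg at hcon
    have hmap : ∀ a ∈ Finset.Iic p, σ a ∈ Finset.Iio p := by
      intro a ha
      exact Finset.mem_Iio.2 (hcon a (Finset.mem_Iic.1 ha))
    have := Finset.card_le_card_of_injOn σ hmap hσinj.injOn
    rw [Fin.card_Iic, Fin.card_Iio] at this
    omega
  have claim2 : ∃ q, p ≤ q ∧ σ q ≤ p := by
    by_contra hcon
    push_neg at hcon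
    have hmap : ∀ a ∈ Finset.Ici p, σ a ∈ Finset.Ioi p := by
      intro a ha
      exact Finset.mem_Ioi.2 (hcon a (Finset.mem_Ici.1 ha))
    have := Finset.card_le_card_of_injOn σ hmap hσinj.injOn
    rw [Fin.card_Ici, Fin.card_Ioi] at this
    have := p.isLt
    omega
  obtain ⟨q1, hq1p, hpq1⟩ := claim1
  obtain ⟨q2, hpq2, hq2p⟩ := claim2
  have h1 : ψ p ≤ φ q1 := by rw [← hψσ q1]; exact hψmono.monotone hpq1
  have h2 : φ q2 ≤ ψ p := by rw [← hψσ q2]; exact hψmono.monotone hq2p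
  have hm1 := h q1
  have hm2 := h q2
  simp only [LPP.N, Set.mem_Icc] at hm1 hm2 ⊢
  constructor
  · calc P.l (ψ p) ≤ P.l (φ q1) := P.l_strictMono.monotone h1
    _ ≤ e q1 := hm1.1
    _ ≤ e p := he hq1p
  · calc e p ≤ e q2 := he hpq2
    _ ≤ P.g (φ q2) := hm2.2
    _ ≤ P.g (ψ p) := P.g_strictMono.monotone h2

end LPMAux

open LPMAux in
set_option maxHeartbeats 400000 in
open LPM in
/-- Circuit characterization in a lattice path matroid: for
`C = {c 0 < c 1 < ⋯ < c k} ⊆ {1,…,m+r}` and `n(C) = {ι 0 < ι 1 < ⋯ < ι (s-1)}`,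
`C` is a circuit of `M[N]` iff (1) `s = k`, (2) `c 0 ∈ N (ι 0)`,
(3) `c k ∈ N (ι (k-1))`, and (4) `c j ∈ N (ι (j-1)) ∩ N (ι j)` for `0 < j < k`;
moreover the indices in `n(C)` of a circuit are consecutive. -/
theorem stmt11 {m r k s : ℕ} (P : LPP m r) (M : Matroid ℕ) (hM : IsLPMOf P M)
    (c : Fin (k + 1) → ℕ) (hc : StrictMono c)
    (hcE : Set.range c ⊆ Set.Icc 1 (m + r))
    (ι : Fin s → Fin r) (hι : StrictMono ι)
    (hn : Set.range ι = {i : Fin r | (Set.range c ∩ P.N i).Nonempty}) :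
    (Circuit M (Set.range c) ↔
      ∃ hs : s = k,
        (∀ hk0 : 0 < k, c ⟨0, by omega⟩ ∈ P.N (ι ⟨0, by omega⟩)) ∧
        (∀ hk0 : 0 < k, c ⟨k, by omega⟩ ∈ P.N (ι ⟨s - 1, by omega⟩)) ∧
        (∀ (j : ℕ) (hj1 : 0 < j) (hj2 : j < k),
          c ⟨j, by omega⟩ ∈ P.N (ι ⟨j - 1, by omega⟩) ∩ P.N (ι ⟨j, by omega⟩))) ∧
    (Circuit M (Set.range c) →
      ∀ (j : ℕ) (hj : j + 1 < s),
        (ι ⟨j + 1, hj⟩ : ℕ) = (ι ⟨j, by omega⟩ : ℕ) + 1) := by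
  classical
  obtain ⟨hE, hIndep⟩ := hM
  have hcinj : Function.Injective c := hc.injective
  have hmemι : ∀ (i : Fin r) (j : Fin (k+1)), c j ∈ P.N i → ∃ p, ι p = i := by
    intro i j hj
    have : i ∈ Set.range ι := by rw [hn]; exact ⟨c j, ⟨j, rfl⟩, hj⟩
    exact this
  have card_le : ∀ {t : ℕ} (φ : Fin t → Fin r), Function.Injective φ →
      (∀ p, ∃ q, ι q = φ p) → t ≤ s := by
    intro t φ hφ hm
    choose ρ hρ using hm
    have hρi : Function.Injective ρ := fun a b hab => hφ (by rw [← hρ a, ← hρ b, hab])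
    simpa using Fintype.card_le_of_injective ρ hρi
  set T : Fin (k+1) → Finset (Fin r) :=
    fun j => Finset.univ.filter (fun i => c j ∈ P.N i) with hT
  have fwd : Circuit M (Set.range c) →
      s = k ∧ (∀ (q : Fin k) (h : (q : ℕ) < s), c q.succ ∈ P.N (ι ⟨q, h⟩)) ∧
        (∀ (q : Fin k) (h : (q : ℕ) < s), c q.castSucc ∈ P.N (ι ⟨q, h⟩)) := by
    intro hCirc
    obtain ⟨hCE, hdep, hmin⟩ := hCirc
    have hdel : ∀ p : Fin (k+1), IsPT P.N (Set.range (c ∘ p.succAbove)) := by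
      intro p
      have hssub : Set.range (c ∘ p.succAbove) ⊂ Set.range c := by
        constructor
        · rintro x ⟨q, rfl⟩; exact ⟨p.succAbove q, rfl⟩
        · intro hsup
          obtain ⟨q, hq⟩ := hsup ⟨p, rfl⟩
          exact Fin.succAbove_ne p q (hcinj hq)
      exact ((hIndep _).1 (hmin _ hssub)).2
    have hdelφ : ∀ p : Fin (k+1), ∃ ψ : Fin k → Fin r, StrictMono ψ ∧
        (∀ q, c (p.succAbove q) ∈ P.N (ψ q)) ∧ ∀ q, ∃ q', ι q' = ψ q := by
      intro p
      obtain ⟨φ, hφi, hφm⟩ := (isPT_range_iff P.N (c ∘ p.succAbove)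
        (hcinj.comp Fin.succAbove_right_injective)).1 (hdel p)
      obtain ⟨ψ, hψmono, hψm, hψr⟩ := sort P (c ∘ p.succAbove)
        (hc.comp (Fin.strictMono_succAbove p)).monotone φ hφi hφm
      refine ⟨ψ, hψmono, hψm, fun q => ?_⟩
      obtain ⟨q', hq'⟩ := hψr q
      exact hmemι (ψ q) (p.succAbove q') (by rw [← hq']; exact hφm q')
    have hks : k ≤ s := by
      obtain ⟨ψ, hψmono, _, hψι⟩ := hdelφ (Fin.last k)
      exact card_le ψ hψmono.injective hψι
    have hsle : s ≤ k := by
      have hnotPT : ¬ IsPT P.N (Set.range c) :=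
        fun h => hdep ((hIndep _).2 ⟨hcE, h⟩)
      have hHallFail : ∃ S : Finset (Fin (k+1)), (S.biUnion T).card < S.card := by
        by_contra hcon
        push_neg at hcon
        apply hnotPT
        obtain ⟨f, hfinj, hfm⟩ :=
          (Finset.all_card_le_biUnion_card_iff_exists_injective T).1 hcon
        refine (isPT_range_iff P.N c hcinj).2 ⟨f, hfinj, fun j => ?_⟩
        have h1 := hfm j
        rw [hT] at h1
        simp only [Finset.mem_filter] at h1
        exact h1.2
      obtain ⟨S, hS⟩ := hHallFail
      have hSuniv : S = Finset.univ := by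
        by_contra hne
        have hproper : (c '' ↑S) ⊂ Set.range c := by
          refine ⟨?_, fun hsup => hne ?_⟩
          · rintro x ⟨j, _, rfl⟩; exact ⟨j, rfl⟩
          · ext j
            simp only [Finset.mem_univ, iff_true]
            obtain ⟨j', hj', hjj⟩ := hsup ⟨j, rfl⟩
            rwa [← hcinj hjj]
        obtain ⟨f, hfinj, hfm⟩ := ((hIndep _).1 (hmin _ hproper)).2
        have hgb : ∀ q : {x // x ∈ S},
            f ⟨c q.1, Set.mem_image_of_mem c q.2⟩ ∈ S.biUnion T := by
          intro q
          refine Finset.mem_biUnion.2 ⟨q.1, q.2, ?_⟩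
          rw [hT]
          simp only [Finset.mem_filter, Finset.mem_univ, true_and]
          exact hfm ⟨c q.1, Set.mem_image_of_mem c q.2⟩
        have hcard := Fintype.card_le_of_injective
          (fun q : {x // x ∈ S} => (⟨_, hgb q⟩ : {x // x ∈ S.biUnion T})) ?_
        · rw [Fintype.card_coe, Fintype.card_coe] at hcard
          omega
        · intro a b hab
          have h1 : f ⟨c a.1, Set.mem_image_of_mem c a.2⟩
              = f ⟨c b.1, Set.mem_image_of_mem c b.2⟩ := congrArg Subtype.val hab
          have h2 := hfinj h1
          rw [Subtype.mk_eq_mk] at h2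
          exact Subtype.ext (hcinj h2)
      have hsb : s ≤ (Finset.univ.biUnion T).card := by
        have hmem : ∀ p : Fin s, ι p ∈ Finset.univ.biUnion T := by
          intro p
          have hp : ι p ∈ Set.range ι := ⟨p, rfl⟩
          rw [hn] at hp
          have hp' : (Set.range c ∩ P.N (ι p)).Nonempty := hp
          obtain ⟨x, ⟨j, rfl⟩, hx⟩ := hp'
          refine Finset.mem_biUnion.2 ⟨j, Finset.mem_univ _, ?_⟩
          rw [hT]
          simp only [Finset.mem_filter, Finset.mem_univ, true_and]
          exact hx
        have hcard := Fintype.card_le_of_injective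
          (fun p => (⟨ι p, hmem p⟩ : {x // x ∈ Finset.univ.biUnion T}))
          (fun a b hab => hι.injective (congrArg Subtype.val hab))
        rwa [Fintype.card_fin, Fintype.card_coe] at hcard
      rw [hSuniv, Finset.card_univ, Fintype.card_fin] at hS
      omega
    have hsk : s = k := le_antisymm hsle hks
    have force : ∀ (p : Fin (k+1)) (q : Fin k) (h : (q : ℕ) < s),
        c (p.succAbove q) ∈ P.N (ι ⟨q, h⟩) := by
      intro p
      obtain ⟨ψ, hψmono, hψm, hψι⟩ := hdelφ p
      choose ρ hρ using hψι
      have hρmono : StrictMono ρ := by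
        intro a b hab
        have h1 : ψ a < ψ b := hψmono hab
        rw [← hρ a, ← hρ b] at h1
        exact hι.lt_iff_lt.1 h1
      have hρval := strictMono_fin_val hsk ρ hρmono
      intro q h
      have hq : ρ q = ⟨q, h⟩ := Fin.ext (hρval q)
      rw [← hq, hρ q]
      exact hψm q
    refine ⟨hsk, fun q h => ?_, fun q h => ?_⟩
    · have := force 0 q h
      rwa [show (0 : Fin (k+1)).succAbove q = q.succ from
        congrFun Fin.succAbove_zero q] at this
    · have := force (Fin.last k) q h
      rwa [show (Fin.last k).succAbove q = q.castSucc from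
        congrFun Fin.succAbove_last q] at this
  refine ⟨⟨?_, ?_⟩, ?_⟩
  · -- forward direction of the iff
    intro hCirc
    obtain ⟨hsk, hA, hB⟩ := fwd hCirc
    subst hsk
    refine ⟨rfl, fun hk0 => ?_, fun hk0 => ?_, fun j hj1 hj2 => ?_⟩
    · exact hB ⟨0, hk0⟩ hk0
    · have h1 := hA ⟨s - 1, by omega⟩ (by omega)
      have he : (⟨s - 1, by omega⟩ : Fin s).succ = ⟨s, by omega⟩ := by
        apply Fin.ext
        simp only [Fin.val_succ]
        omega
      rwa [he] at h1
    · constructor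
      · have h1 := hA ⟨j - 1, by omega⟩ (by omega)
        have he : (⟨j - 1, by omega⟩ : Fin s).succ = ⟨j, by omega⟩ := by
          apply Fin.ext
          simp only [Fin.val_succ]
          omega
        rwa [he] at h1
      · exact hB ⟨j, hj2⟩ hj2
  · -- backward direction of the iff
    rintro ⟨hs, h2, h3, h4⟩
    subst hs
    have key : ∀ (j : ℕ) (hj : j < s), c ⟨j, by omega⟩ ∈ P.N (ι ⟨j, by omega⟩) := by
      intro j hj
      rcases Nat.eq_zero_or_pos j with rfl | hj0
      · exact h2 (by omega)
      · exact (h4 j hj0 hj).2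
    have key2 : ∀ (j : ℕ) (hj1 : 0 < j) (hj2 : j ≤ s),
        c ⟨j, by omega⟩ ∈ P.N (ι ⟨j - 1, by omega⟩) := by
      intro j hj1 hj2
      rcases eq_or_lt_of_le hj2 with rfl | hlt
      · exact h3 (by omega)
      · exact (h4 j hj1 hlt).1
    refine ⟨?_, ?_, ?_⟩
    · rw [hE]; exact hcE
    · intro hInd
      obtain ⟨φ, hφi, hφm⟩ := (isPT_range_iff P.N c hcinj).1 ((hIndep _).1 hInd).2
      have := card_le φ hφi (fun p => hmemι (φ p) p (hφm p))
      omega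
    · intro D hD
      have hDicc : D ⊆ Set.Icc 1 (m + r) := fun x hx => hcE (hD.1 hx)
      refine (hIndep D).2 ⟨hDicc, ?_⟩
      have hex : ∃ p : Fin (s+1), c p ∉ D := by
        by_contra hcon
        push_neg at hcon
        exact hD.2 (fun x hx => by obtain ⟨j, rfl⟩ := hx; exact hcon j)
      obtain ⟨p, hp⟩ := hex
      have hDsub : D ⊆ Set.range (c ∘ p.succAbove) := by
        intro x hx
        obtain ⟨j, rfl⟩ := hD.1 hx
        have hjp : j ≠ p := fun h => hp (h ▸ hx)
        obtain ⟨q, hq⟩ := Fin.exists_succAbove_eq hjp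
        exact ⟨q, by simp [hq]⟩
      refine isPT_subset ?_ hDsub
      refine (isPT_range_iff P.N (c ∘ p.succAbove)
        (hcinj.comp Fin.succAbove_right_injective)).2
        ⟨fun q => ι ⟨(q : ℕ), by omega⟩, ?_, ?_⟩
      · intro a b hab
        have h1 := hι.injective hab
        rw [Fin.mk_eq_mk] at h1
        exact Fin.ext h1
      · intro q
        show c (p.succAbove q) ∈ P.N (ι ⟨(q : ℕ), by omega⟩)
        by_cases hqp : (q : ℕ) < (p : ℕ)
        · rw [Fin.succAbove_of_castSucc_lt p q (by rwa [Fin.lt_def])]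
          have hcs : q.castSucc = (⟨(q : ℕ), by omega⟩ : Fin (s+1)) := Fin.ext rfl
          rw [hcs]
          exact key (q : ℕ) q.isLt
        · rw [Fin.succAbove_of_le_castSucc p q (by rw [Fin.le_def]; simp; omega)]
          have hsucc : q.succ = (⟨(q : ℕ) + 1, by omega⟩ : Fin (s+1)) := Fin.ext rfl
          rw [hsucc]
          have h1 := key2 ((q : ℕ) + 1) (by omega) (by omega)
          have he : (⟨(q : ℕ) + 1 - 1, by omega⟩ : Fin s) = ⟨(q : ℕ), by omega⟩ := by
            apply Fin.ext
            simp
          rwa [he] at h1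
  · -- consecutivity
    intro hCirc j hj
    obtain ⟨hsk, hA, hB⟩ := fwd hCirc
    have hjm : c ⟨j + 1, by omega⟩ ∈ P.N (ι ⟨j, by omega⟩) := by
      have h1 := hA ⟨j, by omega⟩ (by omega)
      have he : (⟨j, by omega⟩ : Fin k).succ = ⟨j + 1, by omega⟩ := Fin.ext rfl
      rwa [he] at h1
    have hjm2 : c ⟨j + 1, by omega⟩ ∈ P.N (ι ⟨j + 1, hj⟩) := by
      have h1 := hB ⟨j + 1, by omega⟩ (by omega)
      have he : (⟨j + 1, by omega⟩ : Fin k).castSucc = ⟨j + 1, by omega⟩ := Fin.ext rfl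
      rwa [he] at h1
    have hlt : (ι ⟨j, by omega⟩ : ℕ) < (ι ⟨j + 1, hj⟩ : ℕ) :=
      hι (Fin.mk_lt_mk.2 (by omega))
    by_contra hne
    have hgap : (ι ⟨j, by omega⟩ : ℕ) + 1 < (ι ⟨j + 1, hj⟩ : ℕ) := by omega
    have hir : (ι ⟨j, by omega⟩ : ℕ) + 1 < r := by
      have := (ι ⟨j + 1, hj⟩).isLt
      omega
    have hci : c ⟨j + 1, by omega⟩ ∈ P.N (⟨(ι ⟨j, by omega⟩ : ℕ) + 1, hir⟩ : Fin r) := by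
      simp only [LPP.N, Set.mem_Icc] at hjm hjm2 ⊢
      constructor
      · refine le_trans (P.l_strictMono.monotone ?_) hjm2.1
        show (ι ⟨j, by omega⟩ : ℕ) + 1 ≤ (ι ⟨j + 1, hj⟩ : ℕ)
        omega
      · refine le_trans hjm.2 (P.g_strictMono.monotone ?_)
        show (ι ⟨j, by omega⟩ : ℕ) ≤ (ι ⟨j, by omega⟩ : ℕ) + 1
        omega
    obtain ⟨p, hpeq⟩ := hmemι _ _ hci
    have l1 : j < (p : ℕ) := by
      have : (ι ⟨j, by omega⟩ : Fin r) < ι p := by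
        rw [hpeq]
        show (ι ⟨j, by omega⟩ : ℕ) < (ι ⟨j, by omega⟩ : ℕ) + 1
        omega
      exact hι.lt_iff_lt.1 this
    have l2 : (p : ℕ) < j + 1 := by
      have : ι p < ι ⟨j + 1, hj⟩ := by
        rw [hpeq]
        show (ι ⟨j, by omega⟩ : ℕ) + 1 < (ι ⟨j + 1, hj⟩ : ℕ)
        exact hgap
      exact hι.lt_iff_lt.1 this
    omega
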